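/- The natural action ρ : Φ × G → Φ defined by ρ(φ,g) = φ∘g is continuous, where Φ carries the topology induced by the norm ‖·‖_V, G carries the topology induced by the pseudo-distance Δ_G, and Φ × G carries the product topology. -/

import Mathlib

open MeasureTheory Filter Topology RealInnerProductSpace

noncomputable section

/-- The topology on a set induced by a pseudo-distance `d`, generated by the open balls. -/
def distTopology {X : Type*} (d : X → X → ℝ) : TopologicalSpace X :=
  TopologicalSpace.generateFrom {s : Set X | ∃ x r, s = {y | d x y < r}}

theorem statement12
    {X : Type*} {V : Type*} [NormedAddCommGroup V] [InnerProductSpace ℝ V]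
    [FiniteDimensional ℝ V] [MeasurableSpace V] [BorelSpace V]
    (ev : V →ₗ[ℝ] (X → ℝ)) (hev : Function.Injective ev)
    (hbdd : ∀ φ : V, BddAbove (Set.range fun x => |ev φ x|))
    (α β : ℝ) (hα : 0 < α) (hβ : 0 < β)
    (hnorm₁ : ∀ φ : V, α * (⨆ x, |ev φ x|) ≤ ‖φ‖)
    (hnorm₂ : ∀ φ : V, ‖φ‖ ≤ β * (⨆ x, |ev φ x|))
    (Φ : Set V)
    (lam : Measure V) (f : V → ℝ) (hf0 : ∀ φ, 0 ≤ f φ)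
    (hfint : Integrable f lam) (hf1 : ∫ φ, f φ ∂lam = 1)
    (hΦsupp : Φ = {φ : V | ∀ U : Set V, IsOpen U → φ ∈ U →
      0 < (lam.withDensity fun ψ => ENNReal.ofReal (f ψ)) U})
    (hΦc : IsCompact Φ)
    {G : Type*} [Group G] (σ : G →* Equiv.Perm X) (hσ : Function.Injective σ)
    (ρ : G → V → V)
    (hρ : ∀ (g : G) (φ : V) (x : X), ev (ρ g φ) x = ev φ (σ g x))
    (hρΦ : ∀ (g : G), ∀ φ ∈ Φ, ρ g φ ∈ Φ)
    (hinner : ∀ (g : G) (φ₁ φ₂ : V), ⟪ρ g φ₁, ρ g φ₂⟫ = ⟪φ₁, φ₂⟫)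
    (hfinv : ∀ (g : G) (φ : V), f (ρ g φ) = f φ)
    (hlaminv : ∀ (g : G) (A : Set V), MeasurableSet A → lam (ρ g '' A) = lam A)
    (ΔG DG : G → G → ℝ)
    (hΔG : ∀ g₁ g₂, ΔG g₁ g₂ = ∫ φ in Φ, ‖ρ g₁ φ - ρ g₂ φ‖ * f φ ∂lam)
    (hDG : ∀ g₁ g₂, DG g₁ g₂ =
      ⨆ φ : Φ, ⨆ x, |ev (ρ g₁ (φ : V)) x - ev (ρ g₂ (φ : V)) x|)
    :
    @Continuous (Φ × G) Φ
      (@instTopologicalSpaceProd Φ G _ (distTopology ΔG)) _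
      (fun p : Φ × G => (⟨ρ p.2 (p.1 : V), hρΦ p.2 (p.1 : V) p.1.2⟩ : Φ)) := by
  letI : TopologicalSpace G := distTopology ΔG
  -- ρ g is linear
  have hlin : ∀ g : G, IsLinearMap ℝ (ρ g) := by
    intro g
    constructor
    · intro φ ψ
      apply hev
      funext x
      simp [hρ, map_add]
    · intro a φ
      apply hev
      funext x
      simp [hρ, _root_.map_smul]
  have hρcont : ∀ g : G, Continuous (ρ g) :=
    fun g => (IsLinearMap.mk' (ρ g) (hlin g)).continuous_of_finiteDimensional
  -- ρ g preserves norms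
  have hnormρ : ∀ (g : G) (φ : V), ‖ρ g φ‖ = ‖φ‖ := by
    intro g φ
    have h := hinner g φ φ
    rw [real_inner_self_eq_norm_sq, real_inner_self_eq_norm_sq] at h
    nlinarith [norm_nonneg (ρ g φ), norm_nonneg φ]
  have hdist : ∀ (g : G) (φ ψ : V), ‖ρ g φ - ρ g ψ‖ = ‖φ - ψ‖ := by
    intro g φ ψ
    have h : ρ g φ - ρ g ψ = ρ g (φ - ψ) :=
      ((IsLinearMap.mk' (ρ g) (hlin g)).map_sub φ ψ).symm
    rw [h, hnormρ]
  set μ : Measure V := lam.withDensity fun ψ => ENNReal.ofReal (f ψ) with hμ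
  have hμfin : μ Set.univ < ⊤ := by
    have h1 : μ Set.univ = ∫⁻ ψ, ENNReal.ofReal (f ψ) ∂lam := by
      rw [hμ, withDensity_apply _ MeasurableSet.univ, Measure.restrict_univ]
    rw [h1, ← ofReal_integral_eq_lintegral_ofReal hfint (ae_of_all _ hf0)]
    exact ENNReal.ofReal_lt_top
  have hΦmeas : MeasurableSet Φ := hΦc.isClosed.measurableSet
  -- the complement of the support is null
  have hμcompl : μ Φᶜ = 0 := by
    obtain ⟨Bas, hBcount, -, hBbasis⟩ := TopologicalSpace.exists_countable_basis V
    set N := {U ∈ Bas | μ U = 0} with hN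
    have hsub : Φᶜ ⊆ ⋃₀ N := by
      intro φ hφ
      simp only [hΦsupp, Set.mem_compl_iff, Set.mem_setOf_eq] at hφ
      push_neg at hφ
      obtain ⟨U, hUopen, hφU, hU0⟩ := hφ
      have hU0' : μ U = 0 := le_zero_iff.mp hU0
      obtain ⟨W, hW, hφW, hWU⟩ := hBbasis.exists_subset_of_mem_open hφU hUopen
      exact ⟨W, ⟨hW, le_antisymm (hU0' ▸ measure_mono hWU) (zero_le)⟩, hφW⟩
    have hN0 : μ (⋃₀ N) = 0 :=
      measure_sUnion_null_iff (hBcount.mono (Set.sep_subset _ _)) |>.mpr fun U hU => hU.2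
    exact measure_mono_null hsub hN0
  suffices hc : Continuous (fun p : Φ × G => ρ p.2 (p.1 : V)) by
    exact hc.subtype_mk _
  rw [continuous_iff_continuousAt]
  rintro ⟨⟨φ₀, hφ₀⟩, g₀⟩
  refine Metric.tendsto_nhds.mpr fun ε hε => ?_
  set ε' := ε / 2 with hε'
  have hε'pos : 0 < ε' := by positivity
  set B := Metric.ball φ₀ (ε' / 4) with hB
  set S := Φ ∩ B with hS
  have hSmeas : MeasurableSet S := hΦmeas.inter measurableSet_ball
  have hμB : 0 < μ B := by
    have h := hΦsupp ▸ hφ₀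
    exact h B Metric.isOpen_ball (Metric.mem_ball_self (by positivity))
  have hμS : 0 < μ S := by
    have hle : μ B ≤ μ S := by
      calc μ B ≤ μ (S ∪ Φᶜ) := measure_mono (by
              intro x hx
              by_cases h : x ∈ Φ
              exacts [Or.inl ⟨h, hx⟩, Or.inr h])
        _ ≤ μ S + μ Φᶜ := measure_union_le _ _
        _ = μ S := by rw [hμcompl, add_zero]
    exact lt_of_lt_of_le hμB hle
  set c := ∫ ψ in S, f ψ ∂lam with hc
  have hcS : c = (μ S).toReal := by
    rw [hc, integral_eq_lintegral_of_nonneg_ae (ae_of_all _ hf0)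
      hfint.aestronglyMeasurable.restrict, hμ, withDensity_apply _ hSmeas]
  have hcpos : 0 < c := by
    rw [hcS]
    exact ENNReal.toReal_pos hμS.ne'
      (lt_of_le_of_lt (measure_mono (Set.subset_univ _)) hμfin).ne
  set δ := ε' / 2 * c with hδ
  have hδpos : 0 < δ := by positivity
  obtain ⟨R, hR⟩ := isBounded_iff_forall_norm_le.mp hΦc.isBounded
  have key : ∀ g : G, ΔG g₀ g < δ → ‖ρ g φ₀ - ρ g₀ φ₀‖ < ε' := by
    intro g hg
    by_contra hcon
    push_neg at hcon
    have hpt : ∀ ψ ∈ S, ε' / 2 ≤ ‖ρ g₀ ψ - ρ g ψ‖ := by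
      intro ψ hψ
      have hd : ‖ψ - φ₀‖ < ε' / 4 := by
        have h := hψ.2
        rw [hB, Metric.mem_ball, dist_eq_norm] at h
        exact h
      have tri : dist (ρ g φ₀) (ρ g₀ φ₀) ≤
          dist (ρ g φ₀) (ρ g ψ) + dist (ρ g ψ) (ρ g₀ ψ) + dist (ρ g₀ ψ) (ρ g₀ φ₀) :=
        dist_triangle4 _ _ _ _
      rw [dist_eq_norm, dist_eq_norm, dist_eq_norm, dist_eq_norm] at tri
      have t1 : ‖ρ g φ₀ - ρ g ψ‖ = ‖ψ - φ₀‖ := by rw [hdist, norm_sub_rev]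
      have t2 : ‖ρ g₀ ψ - ρ g₀ φ₀‖ = ‖ψ - φ₀‖ := hdist _ _ _
      have t3 : ‖ρ g ψ - ρ g₀ ψ‖ = ‖ρ g₀ ψ - ρ g ψ‖ := norm_sub_rev _ _
      linarith
    have hint : IntegrableOn (fun ψ => ‖ρ g₀ ψ - ρ g ψ‖ * f ψ) Φ lam := by
      apply Integrable.bdd_mul (c := 2 * R) hfint.restrict
        ((hρcont g₀).sub (hρcont g)).norm.aestronglyMeasurable.restrict
      refine (ae_restrict_iff' hΦmeas).mpr (ae_of_all _ fun ψ hψ => ?_)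
      rw [norm_norm]
      calc ‖ρ g₀ ψ - ρ g ψ‖ ≤ ‖ρ g₀ ψ‖ + ‖ρ g ψ‖ := norm_sub_le _ _
        _ = 2 * ‖ψ‖ := by rw [hnormρ, hnormρ]; ring
        _ ≤ 2 * R := by linarith [hR ψ hψ]
    have h1 : δ ≤ ∫ ψ in S, ‖ρ g₀ ψ - ρ g ψ‖ * f ψ ∂lam := by
      have heq : δ = ∫ ψ in S, ε' / 2 * f ψ ∂lam := by
        rw [integral_const_mul]
      rw [heq]
      refine setIntegral_mono_on (hfint.restrict.const_mul _)
        (hint.mono_set Set.inter_subset_left) hSmeas fun ψ hψ => ?_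
      exact mul_le_mul_of_nonneg_right (hpt ψ hψ) (hf0 ψ)
    have h2 : ∫ ψ in S, ‖ρ g₀ ψ - ρ g ψ‖ * f ψ ∂lam ≤ ΔG g₀ g := by
      rw [hΔG]
      exact setIntegral_mono_set hint
        (ae_of_all _ fun ψ => mul_nonneg (norm_nonneg _) (hf0 ψ))
        (HasSubset.Subset.eventuallyLE Set.inter_subset_left)
    linarith
  have hBopen : IsOpen {g : G | ΔG g₀ g < δ} :=
    TopologicalSpace.isOpen_generateFrom_of_mem ⟨g₀, δ, rfl⟩
  have hgnb : {g : G | ΔG g₀ g < δ} ∈ 𝓝 g₀ := by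
    refine hBopen.mem_nhds ?_
    have : ΔG g₀ g₀ = 0 := by rw [hΔG]; simp
    simpa [this] using hδpos
  have hφnb : {φ : Φ | ‖(φ : V) - φ₀‖ < ε'} ∈ 𝓝 (⟨φ₀, hφ₀⟩ : Φ) := by
    have hcont : Continuous fun φ : Φ => ‖(φ : V) - φ₀‖ :=
      (continuous_subtype_val.sub continuous_const).norm
    have hopen : IsOpen {φ : Φ | ‖(φ : V) - φ₀‖ < ε'} :=
      isOpen_lt hcont continuous_const
    exact hopen.mem_nhds (by simpa using hε'pos)
  rw [nhds_prod_eq]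
  filter_upwards [Filter.prod_mem_prod hφnb hgnb] with p hp
  obtain ⟨hp1, hp2⟩ := hp
  rw [dist_eq_norm]
  calc ‖ρ p.2 (p.1 : V) - ρ g₀ φ₀‖
      ≤ ‖ρ p.2 (p.1 : V) - ρ p.2 φ₀‖ + ‖ρ p.2 φ₀ - ρ g₀ φ₀‖ := by
        have := dist_triangle (ρ p.2 (p.1 : V)) (ρ p.2 φ₀) (ρ g₀ φ₀)
        rwa [dist_eq_norm, dist_eq_norm, dist_eq_norm] at this
    _ < ε' + ε' := add_lt_add (by rw [hdist]; exact hp1) (key p.2 hp2)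
    _ = ε := by rw [hε']; ring
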